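/- Let A ∈ {0,1}^{m×n} be a binary matrix with at most k nonzero entries per column (k ≥ 1), b ∈ ℕ₊^m a vector of positive integers, W ≥ 1 with W ≤ b_i for all i ∈ [m], and set λ = k + 1. Let f : 2^[n] → ℝ₊ be a normalized monotone submodular set function. Let e_1, …, e_n be an enumeration of [n], write E_t = {e_1, …, e_t} (with E_0 = ∅), and let S ⊆ [n] satisfy: (i) greedy order with respect to S: for every t ∈ [n] and every j ∈ [n]∖E_{t−1}, f_{S∩E_{t−1}}(e_t) ≥ f_{S∩E_{t−1}}(j); and (ii) the selection rule: for every t ∈ [n], e_t ∈ S if and only if Σ_{i=1}^m A_{i e_t}·(λ^{(Σ_{j∈S∩E_{t−1}} A_{ij})/b_i} − 1) < λ − 1. Then S is feasible (Σ_{j∈S} A_{ij} ≤ b_i for all i), and for every feasible S* ⊆ [n], f(S) ≥ f(S*) / (2 + 2·W·(k+1)^{1/W}). -/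

import Mathlib

open Finset

section
variable {α : Type*} [DecidableEq α]

private lemma aux_marg (f : Finset α → ℝ)
    (hsub : ∀ S T : Finset α, f (S ∪ T) + f (S ∩ T) ≤ f S + f T)
    {X Y : Finset α} (hXY : X ⊆ Y) {j : α} (hj : j ∉ Y) :
    f (insert j Y) - f Y ≤ f (insert j X) - f X := by
  have h := hsub (insert j X) Y
  have h1 : insert j X ∪ Y = insert j Y := by
    ext x
    simp only [mem_union, mem_insert]
    have := @hXY x
    constructor
    · rintro ((h | h) | h) <;> tauto
    · rintro (h | h) <;> tauto
  have h2 : insert j X ∩ Y = X := by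
    ext x
    simp only [mem_inter, mem_insert]
    have := @hXY x
    constructor
    · rintro ⟨rfl | h3, h4⟩
      · exact absurd h4 hj
      · exact h3
    · intro h3; exact ⟨Or.inr h3, this h3⟩
  rw [h1, h2] at h
  linarith

private lemma aux_union (f : Finset α → ℝ)
    (hsub : ∀ S T : Finset α, f (S ∪ T) + f (S ∩ T) ≤ f S + f T)
    (S : Finset α) : ∀ T : Finset α, (∀ j ∈ T, j ∉ S) →
      f (S ∪ T) ≤ f S + ∑ j ∈ T, (f (insert j S) - f S) := by
  intro T
  induction T using Finset.induction_on with
  | empty => simp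
  | @insert a T' hnotmem ih =>
    intro hT
    have ha : a ∉ S := hT a (mem_insert_self _ _)
    rw [Finset.sum_insert hnotmem]
    have h1 : S ∪ insert a T' = insert a (S ∪ T') := by
      ext x; simp only [mem_union, mem_insert]; tauto
    rw [h1]
    have h2 : f (insert a (S ∪ T')) - f (S ∪ T') ≤ f (insert a S) - f S :=
      aux_marg f hsub Finset.subset_union_left (by simp [ha, hnotmem])
    have h3 := ih (fun j hj => hT j (Finset.mem_insert_of_mem hj))
    linarith

private lemma aux_nat_sum (T : Finset α) (v : α → ℝ) :
    (∀ j ∈ T, v j = 0 ∨ v j = 1) → ∃ c : ℕ, ∑ j ∈ T, v j = c := by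
  classical
  induction T using Finset.induction_on with
  | empty => exact fun _ => ⟨0, by simp⟩
  | @insert a T' hnotmem ih =>
    intro hv
    obtain ⟨c, hc⟩ := ih (fun j hj => hv j (Finset.mem_insert_of_mem hj))
    rcases hv a (Finset.mem_insert_self _ _) with h0 | h1
    · exact ⟨c, by rw [Finset.sum_insert hnotmem, h0, hc]; simp⟩
    · exact ⟨c + 1, by rw [Finset.sum_insert hnotmem, h1, hc]; push_cast; ring⟩

end

private lemma aux_convex {a s t : ℝ} (ha : 1 ≤ a) (hs : 0 < s) (hst : s ≤ t) :
    a ^ s - 1 ≤ (s / t) * (a ^ t - 1) := by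
  have ht : 0 < t := hs.trans_le hst
  have ha0 : (0:ℝ) < a := lt_of_lt_of_le one_pos ha
  have hb0 : 0 ≤ s / t := le_of_lt (div_pos hs ht)
  have hb1 : s / t ≤ 1 := (div_le_one ht).2 hst
  have hconv := convexOn_exp.2 (Set.mem_univ (0:ℝ)) (Set.mem_univ (Real.log a * t))
    (by linarith : (0:ℝ) ≤ 1 - s / t) hb0 (by ring)
  simp only [smul_eq_mul, mul_zero, Real.exp_zero, zero_add, mul_one] at hconv
  have he1 : s / t * (Real.log a * t) = Real.log a * s := by field_simp
  rw [he1] at hconv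
  rw [Real.rpow_def_of_pos ha0, Real.rpow_def_of_pos ha0]
  nlinarith [hconv]

/-- Column-sparse multiplicative-updates theorem: for a binary
`k`-column-sparse matrix `A`, positive integer capacities `b` with width
`W ≤ b_i`, update factor `λ = k + 1`, a normalized monotone submodular `f`, a
greedy enumeration `e` of `[n]` (with prefixes `E_t`), and a solution set `S`
obeying the selection rule, `S` is feasible and
`f(S) ≥ f(S*) / (2 + 2·W·(k+1)^{1/W})` for every feasible `S*`. -/
theorem stmt_11 (m n k : ℕ) (hk : 1 ≤ k)
    (A : Fin m → Fin n → ℝ) (hA : ∀ i j, A i j = 0 ∨ A i j = 1)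
    (hsparse : ∀ j, ∑ i, A i j ≤ (k : ℝ))
    (b : Fin m → ℕ) (hb : ∀ i, 1 ≤ b i)
    (W : ℝ) (hW : 1 ≤ W) (hwidth : ∀ i, W ≤ (b i : ℝ))
    (lam : ℝ) (hlam : lam = (k : ℝ) + 1)
    (f : Finset (Fin n) → ℝ)
    (hf_nonneg : ∀ S, 0 ≤ f S)
    (hf_norm : f ∅ = 0)
    (hf_mono : ∀ S T : Finset (Fin n), S ⊆ T → f S ≤ f T)
    (hf_submod : ∀ S T : Finset (Fin n), f (S ∪ T) + f (S ∩ T) ≤ f S + f T)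
    (e : ℕ → Fin n) (hinj : ∀ s < n, ∀ t < n, e s = e t → s = t)
    (E : ℕ → Finset (Fin n)) (hE : ∀ t, E t = (Finset.range t).image e)
    (S : Finset (Fin n))
    (hgreedy : ∀ t < n, ∀ j : Fin n, j ∉ E t →
      f (insert j (S ∩ E t)) - f (S ∩ E t)
        ≤ f (insert (e t) (S ∩ E t)) - f (S ∩ E t))
    (hselect : ∀ t < n, (e t ∈ S ↔
      ∑ i, A i (e t) * (lam ^ ((∑ j ∈ S ∩ E t, A i j) / (b i : ℝ)) - 1) < lam - 1)) :
    (∀ i, ∑ j ∈ S, A i j ≤ (b i : ℝ)) ∧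
      ∀ Sstar : Finset (Fin n), (∀ i, ∑ j ∈ Sstar, A i j ≤ (b i : ℝ)) →
        f S ≥ f Sstar / (2 + 2 * W * ((k : ℝ) + 1) ^ (1 / W)) := by
  classical
  have hk1 : (1:ℝ) ≤ (k:ℝ) := by exact_mod_cast hk
  have hlam1 : (1:ℝ) ≤ lam := by rw [hlam]; linarith
  have hlam0 : (0:ℝ) < lam := lt_of_lt_of_le one_pos hlam1
  have hA0 : ∀ i j, 0 ≤ A i j := fun i j => by rcases hA i j with h | h <;> simp [h]
  have hbpos : ∀ i, (0:ℝ) < (b i : ℝ) := fun i => by exact_mod_cast hb i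
  have hW0 : (0:ℝ) < W := lt_of_lt_of_le one_pos hW
  -- E facts
  have hEmono : ∀ {s t : ℕ}, s ≤ t → E s ⊆ E t := by
    intro s t hst
    rw [hE, hE]
    exact Finset.image_subset_image (Finset.range_subset_range.2 hst)
  have heE : ∀ t < n, e t ∉ E t := by
    intro t ht hmem
    rw [hE] at hmem
    obtain ⟨s, hs, hse⟩ := Finset.mem_image.1 hmem
    have hs' : s < t := Finset.mem_range.1 hs
    have := hinj s (hs'.trans ht) t ht hse
    omega
  have hEn : E n = Finset.univ := by
    apply Finset.eq_univ_of_card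
    rw [hE, Finset.card_image_of_injOn
      (fun s hs t ht hst => hinj s (Finset.mem_range.1 hs) t (Finset.mem_range.1 ht) hst)]
    simp
  have hEuniv : ∀ t, n ≤ t → E t = Finset.univ :=
    fun t ht => Finset.univ_subset_iff.1 (hEn ▸ hEmono ht)
  have hE0 : S ∩ E 0 = ∅ := by rw [hE]; simp
  have hstep : ∀ t, S ∩ E (t+1) = if e t ∈ S then insert (e t) (S ∩ E t) else S ∩ E t := by
    intro t
    have h1 : E (t+1) = insert (e t) (E t) := by
      rw [hE, hE, Finset.range_add_one, Finset.image_insert]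
    rw [h1]
    by_cases h : e t ∈ S <;> simp only [if_pos, if_neg, h, if_true, if_false] <;>
      · ext x
        by_cases hx : x = e t <;> simp [hx, h, Finset.mem_insert]
  -- load facts
  have hL0 : ∀ i t, (0:ℝ) ≤ ∑ j ∈ S ∩ E t, A i j :=
    fun i t => Finset.sum_nonneg fun j _ => hA0 i j
  have hLmono : ∀ i, ∀ {s t : ℕ}, s ≤ t →
      ∑ j ∈ S ∩ E s, A i j ≤ ∑ j ∈ S ∩ E t, A i j := by
    intro i s t hst
    exact Finset.sum_le_sum_of_subset_of_nonneg
      (Finset.inter_subset_inter (le_refl S) (hEmono hst)) (fun j _ _ => hA0 i j)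
  have hrp1 : ∀ i t, (1:ℝ) ≤ lam ^ ((∑ j ∈ S ∩ E t, A i j) / (b i : ℝ)) := by
    intro i t
    calc (1:ℝ) = lam ^ (0:ℝ) := (Real.rpow_zero lam).symm
    _ ≤ _ := Real.rpow_le_rpow_of_exponent_le hlam1
        (div_nonneg (hL0 i t) (hbpos i).le)
  -- Feasibility for every prefix
  have hfeas : ∀ t i, ∑ j ∈ S ∩ E t, A i j ≤ (b i : ℝ) := by
    intro t
    induction t with
    | zero => intro i; rw [hE0]; simp [(hbpos i).le]
    | succ t ih =>
      intro i
      by_cases htn : t < n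
      · rw [hstep t]
        by_cases hS : e t ∈ S
        · rw [if_pos hS]
          have hnot : e t ∉ S ∩ E t := fun h => heE t htn (Finset.mem_inter.1 h).2
          rw [Finset.sum_insert hnot]
          rcases hA i (e t) with h0 | h1
          · rw [h0]; simpa using ih i
          · obtain ⟨c, hc⟩ := aux_nat_sum (S ∩ E t) (A i) (fun j _ => hA i j)
            have hP := (hselect t htn).1 hS
            have hlt : (c:ℝ) < (b i : ℝ) := by
              by_contra hge
              push_neg at hge
              have hterm : ∀ i' : Fin m, i' ∈ Finset.univ → (0:ℝ) ≤
                  A i' (e t) * (lam ^ ((∑ j ∈ S ∩ E t, A i' j) / (b i' : ℝ)) - 1) :=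
                fun i' _ => mul_nonneg (hA0 i' (e t)) (by linarith [hrp1 i' t])
              have hbig : lam - 1 ≤
                  A i (e t) * (lam ^ ((∑ j ∈ S ∩ E t, A i j) / (b i : ℝ)) - 1) := by
                have hexp : (1:ℝ) ≤ (∑ j ∈ S ∩ E t, A i j) / (b i : ℝ) := by
                  rw [hc, le_div_iff₀ (hbpos i)]; linarith
                have := Real.rpow_le_rpow_of_exponent_le hlam1 hexp
                rw [Real.rpow_one] at this
                rw [h1, one_mul]
                linarith
              have hsum := Finset.single_le_sum hterm (Finset.mem_univ i)
              linarith
            have hcb : c + 1 ≤ b i := by exact_mod_cast hlt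
            have : (c:ℝ) + 1 ≤ (b i : ℝ) := by exact_mod_cast hcb
            rw [h1, hc]
            linarith
        · rw [if_neg hS]; exact ih i
      · have heq : S ∩ E (t+1) = S ∩ E t := by
          rw [hEuniv t (le_of_not_gt htn), hEuniv (t+1) (by omega)]
        rw [heq]; exact ih i
  have hSE : S ∩ E n = S := by rw [hEn]; exact Finset.inter_univ S
  constructor
  · intro i
    have := hfeas n i
    rwa [hSE] at this
  · intro Sstar hSs
    -- marginal gains along the greedy order
    set g : ℕ → ℝ := fun t => f (insert (e t) (S ∩ E t)) - f (S ∩ E t) with hgdef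
    have hg0 : ∀ t, 0 ≤ g t := by
      intro t
      have := hf_mono (S ∩ E t) (insert (e t) (S ∩ E t)) (Finset.subset_insert _ _)
      simp only [hgdef]
      linarith
    have hginter : ∀ {u t : ℕ}, u ≤ t → t < n → g t ≤ g u := by
      intro u t hut htn
      have hun : u < n := lt_of_le_of_lt hut htn
      have hnotEt : e t ∉ S ∩ E t := fun h => heE t htn (Finset.mem_inter.1 h).2
      have h1 : f (insert (e t) (S ∩ E t)) - f (S ∩ E t)
          ≤ f (insert (e t) (S ∩ E u)) - f (S ∩ E u) :=
        aux_marg f hf_submod (Finset.inter_subset_inter (le_refl S) (hEmono hut)) hnotEt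
      have h2 := hgreedy u hun (e t) (fun h => heE t htn (hEmono hut h))
      simp only [hgdef]
      linarith
    have hfseq : ∀ t : ℕ, f (S ∩ E t)
        = ∑ u ∈ (Finset.range t).filter (fun u => e u ∈ S), g u := by
      intro t
      induction t with
      | zero => rw [hE0]; simp [hf_norm]
      | succ t ih =>
        rw [Finset.range_add_one, Finset.filter_insert]
        by_cases h : e t ∈ S
        · rw [if_pos h, Finset.sum_insert (by simp), hstep t, if_pos h]
          simp only [hgdef]
          rw [ih]
          ring
        · rw [if_neg h, hstep t, if_neg h, ih]
    have hfS : f S = ∑ u ∈ (Finset.range n).filter (fun u => e u ∈ S), g u := by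
      have h := hfseq n
      rwa [hSE] at h
    set TR : Finset ℕ := (Finset.range n).filter (fun t => e t ∈ Sstar ∧ e t ∉ S) with hTRdef
    have hTRmem : ∀ t ∈ TR, t < n ∧ e t ∈ Sstar ∧ e t ∉ S := by
      intro t ht
      simp only [hTRdef, Finset.mem_filter, Finset.mem_range] at ht
      exact ⟨ht.1, ht.2⟩
    have hinjTR : ∀ x ∈ TR, ∀ y ∈ TR, e x = e y → x = y := by
      intro x hx y hy hxy
      exact hinj x (hTRmem x hx).1 y (hTRmem y hy).1 hxy
    have himg : Sstar \ S = TR.image e := by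
      ext j
      simp only [Finset.mem_sdiff, Finset.mem_image]
      constructor
      · rintro ⟨hj1, hj2⟩
        have hj3 : j ∈ E n := by rw [hEn]; exact Finset.mem_univ j
        rw [hE] at hj3
        obtain ⟨t, ht, hte⟩ := Finset.mem_image.1 hj3
        refine ⟨t, ?_, hte⟩
        simp only [hTRdef, Finset.mem_filter, Finset.mem_range]
        refine ⟨Finset.mem_range.1 ht, ?_, ?_⟩ <;> rw [hte]
        · exact hj1
        · exact hj2
      · rintro ⟨t, ht, rfl⟩
        exact ⟨(hTRmem t ht).2.1, (hTRmem t ht).2.2⟩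
    -- Part A : f Sstar ≤ f S + ∑_{t ∈ TR} g t
    have stepA : f Sstar ≤ f S + ∑ t ∈ TR, g t := by
      have s1 : f Sstar ≤ f (S ∪ (Sstar \ S)) := by
        apply hf_mono
        intro x hx
        simp only [Finset.mem_union, Finset.mem_sdiff]
        by_cases hxS : x ∈ S
        · exact Or.inl hxS
        · exact Or.inr ⟨hx, hxS⟩
      have s2 := aux_union f hf_submod S (Sstar \ S) (fun j hj => (Finset.mem_sdiff.1 hj).2)
      have s3 : ∑ j ∈ Sstar \ S, (f (insert j S) - f S)
          = ∑ t ∈ TR, (f (insert (e t) S) - f S) := by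
        rw [himg, Finset.sum_image hinjTR]
      have s4 : ∑ t ∈ TR, (f (insert (e t) S) - f S) ≤ ∑ t ∈ TR, g t := by
        apply Finset.sum_le_sum
        intro t ht
        have h2 := (hTRmem t ht).2.2
        have := aux_marg f hf_submod (Finset.inter_subset_left : S ∩ E t ⊆ S) h2
        simp only [hgdef]
        exact this
      rw [s3] at s2
      linarith
    -- increments of the exponential potential
    set D : Fin m → ℕ → ℝ := fun i u =>
      lam ^ ((∑ j ∈ S ∩ E (u+1), A i j) / (b i : ℝ))
        - lam ^ ((∑ j ∈ S ∩ E u, A i j) / (b i : ℝ)) with hDdef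
    have hDnn : ∀ i u, (0:ℝ) ≤ D i u := by
      intro i u
      have hle : (∑ j ∈ S ∩ E u, A i j) / (b i : ℝ)
          ≤ (∑ j ∈ S ∩ E (u+1), A i j) / (b i : ℝ) :=
        (div_le_div_iff_of_pos_right (hbpos i)).2 (hLmono i (Nat.le_succ u))
      simp only [hDdef]
      have := Real.rpow_le_rpow_of_exponent_le hlam1 hle
      linarith
    have htel : ∀ t i, lam ^ ((∑ j ∈ S ∩ E t, A i j) / (b i : ℝ)) - 1
        = ∑ u ∈ Finset.range t, D i u := by
      intro t i
      simp only [hDdef]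
      rw [Finset.sum_range_sub (fun u => lam ^ ((∑ j ∈ S ∩ E u, A i j) / (b i : ℝ)))]
      rw [hE0]
      simp
    have hDzero : ∀ u, e u ∉ S → ∀ i : Fin m, D i u = 0 := by
      intro u hu i
      simp only [hDdef]
      rw [hstep u, if_neg hu, sub_self]
    -- convexity comparison
    have hbne : ∀ i, ((b i : ℝ)) ≠ 0 := fun i => (hbpos i).ne'
    have hWne : W ≠ 0 := hW0.ne'
    have hconv2 : ∀ i : Fin m, (b i : ℝ) * (lam ^ (1 / (b i : ℝ)) - 1)
        ≤ W * (lam ^ (1 / W) - 1) := by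
      intro i
      have hbW : W ≤ (b i : ℝ) := hwidth i
      have h := aux_convex hlam1 (one_div_pos.mpr (hbpos i))
        (one_div_le_one_div_of_le hW0 hbW)
      have heq : (1 / (b i : ℝ)) / (1 / W) = 1 / (b i : ℝ) * W := by
        rw [div_div_eq_mul_div, div_one]
      rw [heq] at h
      calc (b i : ℝ) * (lam ^ (1 / (b i : ℝ)) - 1)
          ≤ (b i : ℝ) * (1 / (b i : ℝ) * W * (lam ^ (1 / W) - 1)) :=
            mul_le_mul_of_nonneg_left h (hbpos i).le
        _ = ((b i : ℝ) * (1 / (b i : ℝ))) * (W * (lam ^ (1 / W) - 1)) := by ring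
        _ = W * (lam ^ (1 / W) - 1) := by
            rw [mul_one_div_cancel (hbne i), one_mul]
    have hrpW : (1:ℝ) ≤ lam ^ (1 / W) := by
      calc (1:ℝ) = lam ^ (0:ℝ) := (Real.rpow_zero lam).symm
      _ ≤ _ := Real.rpow_le_rpow_of_exponent_le hlam1 (by positivity)
    have hCnn : (0:ℝ) ≤ W * (lam ^ (1 / W) - 1) := mul_nonneg hW0.le (by linarith)
    -- bound on weights at acceptance times
    have hacc2k : ∀ u, u < n → e u ∈ S →
        ∑ i, A i (e u) * lam ^ ((∑ j ∈ S ∩ E u, A i j) / (b i : ℝ)) ≤ 2 * (k : ℝ) := by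
      intro u hun hu
      have h1 := (hselect u hun).1 hu
      have h1' : ∑ i, A i (e u) * (lam ^ ((∑ j ∈ S ∩ E u, A i j) / (b i : ℝ)) - 1)
          < (k : ℝ) := by
        have hlk : lam - 1 = (k : ℝ) := by rw [hlam]; ring
        linarith
      have h2 := hsparse (e u)
      have h3 : ∑ i, A i (e u) * lam ^ ((∑ j ∈ S ∩ E u, A i j) / (b i : ℝ))
          = (∑ i, A i (e u) * (lam ^ ((∑ j ∈ S ∩ E u, A i j) / (b i : ℝ)) - 1))
            + ∑ i, A i (e u) := by
        rw [← Finset.sum_add_distrib]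
        apply Finset.sum_congr rfl
        intro i _
        ring
      rw [h3]
      linarith
    -- per-row increment bound
    have hDbound : ∀ u, u < n → e u ∈ S → ∀ i : Fin m,
        (b i : ℝ) * D i u
        ≤ W * (lam ^ (1 / W) - 1)
            * (A i (e u) * lam ^ ((∑ j ∈ S ∩ E u, A i j) / (b i : ℝ))) := by
      intro u hun hu i
      have hnot : e u ∉ S ∩ E u := fun h => heE u hun (Finset.mem_inter.1 h).2
      have hL1 : ∑ j ∈ S ∩ E (u+1), A i j = A i (e u) + ∑ j ∈ S ∩ E u, A i j := by
        rw [hstep u, if_pos hu, Finset.sum_insert hnot]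
      rcases hA i (e u) with h0 | h1
      · have : D i u = 0 := by
          simp only [hDdef]
          rw [hL1, h0, zero_add, sub_self]
        rw [this, h0]
        simp
      · have hsplit : lam ^ ((∑ j ∈ S ∩ E (u+1), A i j) / (b i : ℝ))
            = lam ^ ((∑ j ∈ S ∩ E u, A i j) / (b i : ℝ)) * lam ^ (1 / (b i : ℝ)) := by
          rw [hL1, h1, add_div, Real.rpow_add hlam0]
          ring
        have hDval : D i u = lam ^ ((∑ j ∈ S ∩ E u, A i j) / (b i : ℝ))
            * (lam ^ (1 / (b i : ℝ)) - 1) := by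
          simp only [hDdef]
          rw [hsplit]
          ring
        have hX : (0:ℝ) ≤ lam ^ ((∑ j ∈ S ∩ E u, A i j) / (b i : ℝ)) :=
          Real.rpow_nonneg hlam0.le _
        rw [hDval, h1]
        calc (b i : ℝ) * (lam ^ ((∑ j ∈ S ∩ E u, A i j) / (b i : ℝ))
                * (lam ^ (1 / (b i : ℝ)) - 1))
            = lam ^ ((∑ j ∈ S ∩ E u, A i j) / (b i : ℝ))
                * ((b i : ℝ) * (lam ^ (1 / (b i : ℝ)) - 1)) := by ring
          _ ≤ lam ^ ((∑ j ∈ S ∩ E u, A i j) / (b i : ℝ))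
                * (W * (lam ^ (1 / W) - 1)) :=
              mul_le_mul_of_nonneg_left (hconv2 i) hX
          _ = W * (lam ^ (1 / W) - 1)
                * (1 * lam ^ ((∑ j ∈ S ∩ E u, A i j) / (b i : ℝ))) := by ring
    -- the core charging bound
    have hcore : (k : ℝ) * ∑ t ∈ TR, g t
        ≤ (k : ℝ) * (2 * (W * (lam ^ (1 / W) - 1)) * f S) := by
      have c1 : (k : ℝ) * ∑ t ∈ TR, g t ≤ ∑ t ∈ TR, g t *
          ∑ i, A i (e t) * (lam ^ ((∑ j ∈ S ∩ E t, A i j) / (b i : ℝ)) - 1) := by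
        rw [Finset.mul_sum]
        apply Finset.sum_le_sum
        intro t ht
        obtain ⟨htn, _, h2⟩ := hTRmem t ht
        have hrej : lam - 1 ≤
            ∑ i, A i (e t) * (lam ^ ((∑ j ∈ S ∩ E t, A i j) / (b i : ℝ)) - 1) := by
          by_contra hcon
          push_neg at hcon
          exact h2 ((hselect t htn).2 hcon)
        have hk' : (k : ℝ) ≤
            ∑ i, A i (e t) * (lam ^ ((∑ j ∈ S ∩ E t, A i j) / (b i : ℝ)) - 1) := by
          have hlk : lam - 1 = (k : ℝ) := by rw [hlam]; ring
          linarith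
        calc (k : ℝ) * g t = g t * (k : ℝ) := mul_comm _ _
          _ ≤ _ := mul_le_mul_of_nonneg_left hk' (hg0 t)
      have c2 : ∑ t ∈ TR, (g t *
            ∑ i, A i (e t) * (lam ^ ((∑ j ∈ S ∩ E t, A i j) / (b i : ℝ)) - 1))
          = ∑ u ∈ Finset.range n, ∑ i, ∑ t ∈ TR,
              (if u < t then g t * (A i (e t) * D i u) else 0) := by
        have per_t : ∀ t ∈ TR, g t *
            ∑ i, A i (e t) * (lam ^ ((∑ j ∈ S ∩ E t, A i j) / (b i : ℝ)) - 1)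
            = ∑ u ∈ Finset.range n, ∑ i,
                (if u < t then g t * (A i (e t) * D i u) else 0) := by
          intro t ht
          have htn := (hTRmem t ht).1
          have hrt : Finset.range t = (Finset.range n).filter (fun u => u < t) := by
            ext u
            simp only [Finset.mem_range, Finset.mem_filter]
            omega
          calc g t * ∑ i, A i (e t) * (lam ^ ((∑ j ∈ S ∩ E t, A i j) / (b i : ℝ)) - 1)
              = ∑ i, ∑ u ∈ Finset.range t, g t * (A i (e t) * D i u) := by
                rw [Finset.mul_sum]
                apply Finset.sum_congr rfl
                intro i _
                rw [htel t i, Finset.mul_sum, Finset.mul_sum]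
            _ = ∑ i, ∑ u ∈ Finset.range n,
                  (if u < t then g t * (A i (e t) * D i u) else 0) := by
                apply Finset.sum_congr rfl
                intro i _
                rw [hrt, Finset.sum_filter]
            _ = ∑ u ∈ Finset.range n, ∑ i,
                  (if u < t then g t * (A i (e t) * D i u) else 0) := Finset.sum_comm
        refine (Finset.sum_congr rfl per_t).trans (Finset.sum_comm.trans ?_)
        apply Finset.sum_congr rfl
        intro u _
        exact Finset.sum_comm
      have c3 : ∀ u ∈ Finset.range n, (∑ i, ∑ t ∈ TR,
            (if u < t then g t * (A i (e t) * D i u) else 0))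
          ≤ (if e u ∈ S then g u * (2 * (k:ℝ) * (W * (lam ^ (1 / W) - 1))) else 0) := by
        intro u hu
        have hun : u < n := Finset.mem_range.1 hu
        by_cases huS : e u ∈ S
        · rw [if_pos huS]
          have inner : ∀ i : Fin m, i ∈ (Finset.univ : Finset (Fin m)) →
              (∑ t ∈ TR, (if u < t then g t * (A i (e t) * D i u) else 0))
              ≤ g u * ((b i : ℝ) * D i u) := by
            intro i _
            have hD := hDnn i u
            have step1 : (∑ t ∈ TR, (if u < t then g t * (A i (e t) * D i u) else 0))
                ≤ ∑ t ∈ TR, (if u < t then g u * (A i (e t) * D i u) else 0) := by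
              apply Finset.sum_le_sum
              intro t ht
              by_cases hut : u < t
              · rw [if_pos hut, if_pos hut]
                exact mul_le_mul_of_nonneg_right
                  (hginter (le_of_lt hut) (hTRmem t ht).1)
                  (mul_nonneg (hA0 i (e t)) hD)
              · simp only [if_neg hut]
                exact le_refl 0
            have step2 : ∑ t ∈ TR, (if u < t then g u * (A i (e t) * D i u) else 0)
                = g u * D i u * ∑ t ∈ TR.filter (fun t => u < t), A i (e t) := by
              have h1 : ∑ t ∈ TR.filter (fun t => u < t), (g u * D i u * A i (e t))
                  = ∑ t ∈ TR, if u < t then g u * D i u * A i (e t) else 0 :=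
                Finset.sum_filter _ _
              calc ∑ t ∈ TR, (if u < t then g u * (A i (e t) * D i u) else 0)
                  = ∑ t ∈ TR, (if u < t then g u * D i u * A i (e t) else 0) := by
                    apply Finset.sum_congr rfl
                    intro t _
                    split_ifs with h
                    · ring
                    · rfl
                _ = ∑ t ∈ TR.filter (fun t => u < t), (g u * D i u * A i (e t)) := h1.symm
                _ = g u * D i u * ∑ t ∈ TR.filter (fun t => u < t), A i (e t) :=
                    (Finset.mul_sum _ _ _).symm
            have step3 : ∑ t ∈ TR.filter (fun t => u < t), A i (e t) ≤ (b i : ℝ) := by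
              have himg2 : ∑ t ∈ TR.filter (fun t => u < t), A i (e t)
                  = ∑ j ∈ (TR.filter (fun t => u < t)).image e, A i j :=
                (Finset.sum_image (fun x hx y hy =>
                  hinjTR x (Finset.mem_filter.1 hx).1 y (Finset.mem_filter.1 hy).1)).symm
              rw [himg2]
              refine le_trans (Finset.sum_le_sum_of_subset_of_nonneg ?_
                (fun j _ _ => hA0 i j)) (hSs i)
              intro j hj
              obtain ⟨t, ht, rfl⟩ := Finset.mem_image.1 hj
              exact (hTRmem t (Finset.mem_filter.1 ht).1).2.1
            calc (∑ t ∈ TR, (if u < t then g t * (A i (e t) * D i u) else 0))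
                ≤ ∑ t ∈ TR, (if u < t then g u * (A i (e t) * D i u) else 0) := step1
              _ = g u * D i u * ∑ t ∈ TR.filter (fun t => u < t), A i (e t) := step2
              _ ≤ g u * D i u * (b i : ℝ) :=
                  mul_le_mul_of_nonneg_left step3 (mul_nonneg (hg0 u) hD)
              _ = g u * ((b i : ℝ) * D i u) := by ring
          have hsum1 : ∑ i, (b i : ℝ) * D i u
              ≤ W * (lam ^ (1 / W) - 1)
                  * ∑ i, A i (e u) * lam ^ ((∑ j ∈ S ∩ E u, A i j) / (b i : ℝ)) := by
            rw [Finset.mul_sum]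
            exact Finset.sum_le_sum (fun i _ => hDbound u hun huS i)
          have hsum2 : W * (lam ^ (1 / W) - 1)
                * ∑ i, A i (e u) * lam ^ ((∑ j ∈ S ∩ E u, A i j) / (b i : ℝ))
              ≤ W * (lam ^ (1 / W) - 1) * (2 * (k:ℝ)) :=
            mul_le_mul_of_nonneg_left (hacc2k u hun huS) hCnn
          calc (∑ i, ∑ t ∈ TR, (if u < t then g t * (A i (e t) * D i u) else 0))
              ≤ ∑ i, g u * ((b i : ℝ) * D i u) := Finset.sum_le_sum inner
            _ = g u * ∑ i, (b i : ℝ) * D i u := by rw [Finset.mul_sum]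
            _ ≤ g u * (W * (lam ^ (1 / W) - 1) * (2 * (k:ℝ))) := by
                apply mul_le_mul_of_nonneg_left _ (hg0 u)
                exact le_trans hsum1 hsum2
            _ = g u * (2 * (k:ℝ) * (W * (lam ^ (1 / W) - 1))) := by ring
        · rw [if_neg huS]
          apply le_of_eq
          apply Finset.sum_eq_zero
          intro i _
          apply Finset.sum_eq_zero
          intro t _
          rw [hDzero u huS i]
          split_ifs <;> ring
      have c4 : ∑ u ∈ Finset.range n,
            (if e u ∈ S then g u * (2 * (k:ℝ) * (W * (lam ^ (1 / W) - 1))) else 0)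
          = (k : ℝ) * (2 * (W * (lam ^ (1 / W) - 1)) * f S) := by
        have h1 : ∑ u ∈ (Finset.range n).filter (fun u => e u ∈ S),
              (g u * (2 * (k:ℝ) * (W * (lam ^ (1 / W) - 1))))
            = ∑ u ∈ Finset.range n,
              (if e u ∈ S then g u * (2 * (k:ℝ) * (W * (lam ^ (1 / W) - 1))) else 0) :=
          Finset.sum_filter _ _
        rw [← h1, ← Finset.sum_mul, ← hfS]
        ring
      calc (k : ℝ) * ∑ t ∈ TR, g t
          ≤ ∑ t ∈ TR, (g t *
              ∑ i, A i (e t) * (lam ^ ((∑ j ∈ S ∩ E t, A i j) / (b i : ℝ)) - 1)) := c1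
        _ = ∑ u ∈ Finset.range n, ∑ i, ∑ t ∈ TR,
              (if u < t then g t * (A i (e t) * D i u) else 0) := c2
        _ ≤ ∑ u ∈ Finset.range n,
              (if e u ∈ S then g u * (2 * (k:ℝ) * (W * (lam ^ (1 / W) - 1))) else 0) :=
            Finset.sum_le_sum c3
        _ = (k : ℝ) * (2 * (W * (lam ^ (1 / W) - 1)) * f S) := c4
    have hkpos : (0:ℝ) < (k : ℝ) := lt_of_lt_of_le one_pos hk1
    have hsumTR : ∑ t ∈ TR, g t ≤ 2 * (W * (lam ^ (1 / W) - 1)) * f S :=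
      le_of_mul_le_mul_left hcore hkpos
    -- conclusion
    have hden : (0:ℝ) < 2 + 2 * W * ((k : ℝ) + 1) ^ (1 / W) := by
      have h1 : (0:ℝ) ≤ W * ((k : ℝ) + 1) ^ (1 / W) :=
        mul_nonneg hW0.le (Real.rpow_nonneg (by positivity) _)
      linarith
    rw [ge_iff_le, div_le_iff₀ hden]
    have h2 : lam ^ (1 / W) = ((k : ℝ) + 1) ^ (1 / W) := by rw [hlam]
    have h1 : f Sstar ≤ f S + 2 * (W * (((k : ℝ) + 1) ^ (1 / W) - 1)) * f S := by
      rw [← h2]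
      linarith
    have expand : f S + 2 * (W * (((k : ℝ) + 1) ^ (1 / W) - 1)) * f S
        = f S * (2 + 2 * W * ((k : ℝ) + 1) ^ (1 / W)) - f S * (1 + 2 * W) := by
      ring
    have hnn : (0:ℝ) ≤ f S * (1 + 2 * W) :=
      mul_nonneg (hf_nonneg S) (by linarith)
    linarith
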